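/- Let f_{0,0}, f_{1,0}, f_{2,0}, f_{3,0}: ℝ² → ℝ be smooth and satisfy ∂_x f_{j−1,0} + ∂_y f_{j,0} = 0 on ℝ² for all 0 ≤ j ≤ 4 (with f_{−1,0} = f_{4,0}... := 0 for indices outside 0..3). Define φ_{j,1} := ((j+1)/2) ∂_x f_{j+1,0} + ((3−j)/2) ∂_y f_{j,0}, φ_{j,2} := (1/2) Σ_{a=0}^{2} C(j+a, a) C(3−j−a, 2−a) ∂_x^a ∂_y^{2−a} f_{j+a,0} (with C the binomial coefficient, 0 for invalid entries, and φ_{−1,2} := 0), and Q_{j,2} := 2 ∂_x φ_{j−1,2} + 2 ∂_y φ_{j,2} + ∂_x² φ_{j,1} + ∂_y² φ_{j,1}. Then Q_{j,2} vanishes identically on ℝ² for j = 0, 1, 2; consequently, for N = 3 the ℓ = 1 quantum determining equations are independent of ħ and identical to the classical ones. -/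

import Mathlib

noncomputable section

/-- Partial derivative with respect to `x` of a function on `ℝ²`. -/
def pdx (f : ℝ × ℝ → ℝ) : ℝ × ℝ → ℝ := fun q => fderiv ℝ f q (1, 0)

/-- Partial derivative with respect to `y` of a function on `ℝ²`. -/
def pdy (f : ℝ × ℝ → ℝ) : ℝ × ℝ → ℝ := fun q => fderiv ℝ f q (0, 1)

/-- Binomial coefficient with integer entries, equal to `0` when the lower entry is
negative or exceeds the upper entry. -/
def intChoose (n k : ℤ) : ℝ :=
  if 0 ≤ k ∧ k ≤ n then (n.toNat.choose k.toNat : ℝ) else 0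

/-- `φ_{j,1} = ((j+1)/2) ∂_x f_{j+1,0} + ((N−j)/2) ∂_y f_{j,0}` (here `N = 3`). -/
def phi1 (N : ℕ) (f0 : ℤ → ℝ × ℝ → ℝ) (j : ℤ) : ℝ × ℝ → ℝ := fun q =>
  ((j : ℝ) + 1) / 2 * pdx (f0 (j + 1)) q + ((N : ℝ) - (j : ℝ)) / 2 * pdy (f0 j) q

/-- `φ_{j,2} = (1/2) Σ_{a=0}^{2} C(j+a,a) C(N−j−a,2−a) ∂_x^a ∂_y^{2−a} f_{j+a,0}`,
with the convention `φ_{−1,2} = 0`. -/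
def phi2 (N : ℕ) (f0 : ℤ → ℝ × ℝ → ℝ) (j : ℤ) : ℝ × ℝ → ℝ :=
  if j = -1 then 0 else fun q =>
    (1 / 2) * ∑ a ∈ Finset.range 3,
      intChoose (j + (a : ℤ)) (a : ℤ) * intChoose ((N : ℤ) - j - (a : ℤ)) (2 - (a : ℤ)) *
        (pdx^[a] (pdy^[2 - a] (f0 (j + (a : ℤ))))) q

/-- The quantum correction `Q_{j,2} = 2∂_x φ_{j−1,2} + 2∂_y φ_{j,2} + ∂_x² φ_{j,1} + ∂_y² φ_{j,1}`. -/
def Q2 (N : ℕ) (f0 : ℤ → ℝ × ℝ → ℝ) (j : ℤ) : ℝ × ℝ → ℝ := fun q =>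
  2 * pdx (phi2 N f0 (j - 1)) q + 2 * pdy (phi2 N f0 j) q +
    (pdx^[2] (phi1 N f0 j)) q + (pdy^[2] (phi1 N f0 j)) q

/-! ### Auxiliary toolkit for `pdx`, `pdy` -/

namespace Stmt14Aux

variable {f g : ℝ × ℝ → ℝ} {c : ℝ}

lemma le1 : ((⊤:ℕ∞) : WithTop ℕ∞) + 1 ≤ ((⊤:ℕ∞) : WithTop ℕ∞) := by exact_mod_cast le_top
lemma le2 : ((⊤:ℕ∞) : WithTop ℕ∞) ≠ 0 := by exact_mod_cast (ENat.top_ne_zero : (⊤:ℕ∞) ≠ 0)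

lemma pd_smooth (hf : ContDiff ℝ (⊤:ℕ∞) f) (v : ℝ × ℝ) :
    ContDiff ℝ (⊤:ℕ∞) (fun q => fderiv ℝ f q v) :=
  (ContinuousLinearMap.apply ℝ ℝ v).contDiff.comp (hf.fderiv_right (m := (⊤:ℕ∞)) le1)

lemma pdx_smooth (hf : ContDiff ℝ (⊤:ℕ∞) f) : ContDiff ℝ (⊤:ℕ∞) (pdx f) := pd_smooth hf _
lemma pdy_smooth (hf : ContDiff ℝ (⊤:ℕ∞) f) : ContDiff ℝ (⊤:ℕ∞) (pdy f) := pd_smooth hf _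

lemma pdx_zero : pdx (0 : ℝ × ℝ → ℝ) = 0 := by
  funext q; show fderiv ℝ (fun _ => (0:ℝ)) q (1,0) = 0; simp

lemma pdy_zero : pdy (0 : ℝ × ℝ → ℝ) = 0 := by
  funext q; show fderiv ℝ (fun _ => (0:ℝ)) q (0,1) = 0; simp

lemma pdx_neg : pdx (fun q => -(f q)) = fun q => -(pdx f q) := by
  funext q; simp [pdx, fderiv_neg]

lemma pdy_neg : pdy (fun q => -(f q)) = fun q => -(pdy f q) := by
  funext q; simp [pdy, fderiv_neg]

lemma pdx_add (hf : Differentiable ℝ f) (hg : Differentiable ℝ g) :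
    pdx (fun q => f q + g q) = fun q => pdx f q + pdx g q := by
  funext q; simp [pdx, fderiv_fun_add (hf q) (hg q)]

lemma pdy_add (hf : Differentiable ℝ f) (hg : Differentiable ℝ g) :
    pdy (fun q => f q + g q) = fun q => pdy f q + pdy g q := by
  funext q; simp [pdy, fderiv_fun_add (hf q) (hg q)]

lemma pdx_const_mul (hf : Differentiable ℝ f) (c : ℝ) :
    pdx (fun q => c * f q) = fun q => c * pdx f q := by
  funext q; simp [pdx, fderiv_const_mul (hf q) c]

lemma pdy_const_mul (hf : Differentiable ℝ f) (c : ℝ) :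
    pdy (fun q => c * f q) = fun q => c * pdy f q := by
  funext q; simp [pdy, fderiv_const_mul (hf q) c]

/-- Clairaut's theorem for smooth functions. -/
lemma pdx_pdy (hf : ContDiff ℝ (⊤:ℕ∞) f) : pdx (pdy f) = pdy (pdx f) := by
  funext q
  have hd : ∀ y, HasFDerivAt f (fderiv ℝ f y) y :=
    fun y => (hf.differentiable le2 y).hasFDerivAt
  have h2 : DifferentiableAt ℝ (fderiv ℝ f) q :=
    ((hf.fderiv_right (m := (⊤:ℕ∞)) le1).differentiable le2) q
  have hsymm := second_derivative_symmetric hd h2.hasFDerivAt ((1:ℝ),(0:ℝ)) ((0:ℝ),(1:ℝ))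
  have e1 : ∀ v w : ℝ × ℝ, fderiv ℝ (fun p => fderiv ℝ f p v) q w
      = fderiv ℝ (fderiv ℝ f) q w v := by
    intro v w
    have := fderiv_clm_apply (c := fderiv ℝ f) (u := fun _ => v) h2 (differentiableAt_const v)
    rw [this]; simp
  show fderiv ℝ (pdy f) q (1,0) = fderiv ℝ (pdx f) q (0,1)
  rw [show pdy f = fun p => fderiv ℝ f p (0,1) from rfl,
      show pdx f = fun p => fderiv ℝ f p (1,0) from rfl, e1, e1]
  exact hsymm

lemma ic00 : intChoose 0 0 = 1 := by norm_num [intChoose]; try rfl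
lemma ic32 : intChoose 3 2 = 3 := by norm_num [intChoose]; try rfl
lemma ic11 : intChoose 1 1 = 1 := by norm_num [intChoose]; try rfl
lemma ic21 : intChoose 2 1 = 2 := by norm_num [intChoose]; try rfl
lemma ic22 : intChoose 2 2 = 1 := by norm_num [intChoose]; try rfl
lemma ic10 : intChoose 1 0 = 1 := by norm_num [intChoose]; try rfl
lemma ic20 : intChoose 2 0 = 1 := by norm_num [intChoose]; try rfl
lemma ic12 : intChoose 1 2 = 0 := by norm_num [intChoose]; try rfl
lemma ic31 : intChoose 3 1 = 3 := by norm_num [intChoose]; try rfl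
lemma ic01 : intChoose 0 1 = 0 := by norm_num [intChoose]; try rfl
lemma ic42 : intChoose 4 2 = 6 := by norm_num [intChoose]; try rfl
lemma icm10 : intChoose (-1) 0 = 0 := by norm_num [intChoose]; try rfl

end Stmt14Aux

open Stmt14Aux

/-- for `N = 3`, if the smooth functions `f_{0,0}, …, f_{3,0}` (zero outside
indices `0..3`) satisfy the leading-order equations `∂_x f_{j−1,0} + ∂_y f_{j,0} = 0` for
`0 ≤ j ≤ 4`, then the quantum corrections `Q_{j,2}` vanish identically for `j = 0, 1, 2`. -/
theorem stmt_14 (f0 : ℤ → ℝ × ℝ → ℝ)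
    (hf0 : ∀ j : ℤ, 0 ≤ j → j ≤ 3 → ContDiff ℝ (⊤ : ℕ∞) (f0 j))
    (hzero : ∀ j : ℤ, (j < 0 ∨ 3 < j) → f0 j = 0)
    (hlead : ∀ j : ℤ, 0 ≤ j → j ≤ 4 →
      ∀ q : ℝ × ℝ, pdx (f0 (j - 1)) q + pdy (f0 j) q = 0) :
    ∀ j : ℕ, j ≤ 2 → ∀ q : ℝ × ℝ, Q2 3 f0 (j : ℤ) q = 0 := by
  have S0 := hf0 0 (by norm_num) (by norm_num)
  have S1 := hf0 1 (by norm_num) (by norm_num)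
  have S2 := hf0 2 (by norm_num) (by norm_num)
  have S3 := hf0 3 (by norm_num) (by norm_num)
  have hm1 : f0 (-1) = 0 := hzero _ (by norm_num)
  have h4 : f0 4 = 0 := hzero _ (by norm_num)
  -- basic relations from the leading-order equations
  have A : pdy (f0 0) = 0 := by
    funext p
    have h := hlead 0 (by norm_num) (by norm_num) p
    rw [show (0:ℤ) - 1 = -1 by norm_num, hm1, pdx_zero] at h
    simpa using h
  have B : pdx (f0 3) = 0 := by
    funext p
    have h := hlead 4 (by norm_num) (by norm_num) p
    rw [show (4:ℤ) - 1 = 3 by norm_num, h4, pdy_zero] at h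
    simpa using h
  have r1 : pdy (f0 1) = fun p => -(pdx (f0 0) p) := by
    funext p
    have h := hlead 1 (by norm_num) (by norm_num) p
    rw [show (1:ℤ) - 1 = 0 by norm_num] at h
    linarith
  have r2 : pdy (f0 2) = fun p => -(pdx (f0 1) p) := by
    funext p
    have h := hlead 2 (by norm_num) (by norm_num) p
    rw [show (2:ℤ) - 1 = 1 by norm_num] at h
    linarith
  have r3 : pdy (f0 3) = fun p => -(pdx (f0 2) p) := by
    funext p
    have h := hlead 3 (by norm_num) (by norm_num) p
    rw [show (3:ℤ) - 1 = 2 by norm_num] at h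
    linarith
  have r2x : pdx (f0 1) = fun p => -(pdy (f0 2) p) := by
    funext p; simp [r2]
  have r3x : pdx (f0 2) = fun p => -(pdy (f0 3) p) := by
    funext p; simp [r3]
  -- vanishing second and third derivatives
  have zz0 : pdy (pdy (f0 0)) = 0 := by rw [A, pdy_zero]
  have zz3 : pdx (pdx (f0 3)) = 0 := by rw [B, pdx_zero]
  have z1 : pdy (pdy (f0 1)) = 0 := by
    rw [r1, pdy_neg, ← pdx_pdy S0, A, pdx_zero]
    funext p; simp
  have z2 : pdx (pdx (f0 2)) = 0 := by
    rw [r3x, pdx_neg, pdx_pdy S3, B, pdy_zero]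
    funext p; simp
  have z4 : pdx (pdx (pdx (f0 1))) = 0 := by
    rw [r2x, pdx_neg, pdx_neg, pdx_pdy S2, pdx_pdy (pdx_smooth S2), z2, pdy_zero]
    funext p; simp
  have z3 : pdy (pdy (pdy (f0 2))) = 0 := by
    rw [r2, pdy_neg, pdy_neg, ← pdx_pdy S1, ← pdx_pdy (pdy_smooth S1), z1, pdx_zero]
    funext p; simp
  have zq : pdy (pdx (pdy (f0 1))) = 0 := by
    rw [← pdx_pdy (pdy_smooth S1), z1, pdx_zero]
  have zxx2 : pdx (pdx (pdy (f0 2))) = 0 := by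
    rw [r2, pdx_neg, pdx_neg, z4]
    funext p; simp
  have zxf2 : pdx (pdx (pdx (f0 2))) = 0 := by rw [z2, pdx_zero]
  have zyf1 : pdy (pdy (pdy (f0 1))) = 0 := by rw [z1, pdy_zero]
  -- the cancellation identities for j = 1
  have e2 : pdy (pdx (pdy (f0 2))) = fun p => -(pdx (pdx (pdy (f0 1))) p) := by
    rw [r2, pdx_neg, pdy_neg, ← pdx_pdy (pdx_smooth S1), ← pdx_pdy S1]
  have e4 : pdy (pdy (pdx (f0 2))) = fun p => -(pdx (pdx (pdy (f0 1))) p) := by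
    rw [← pdx_pdy S2]; exact e2
  -- differentiability facts
  have D1x : Differentiable ℝ (pdx (f0 1)) := (pdx_smooth S1).differentiable le2
  have D1xx : Differentiable ℝ (pdx (pdx (f0 1))) :=
    (pdx_smooth (pdx_smooth S1)).differentiable le2
  have D1y : Differentiable ℝ (pdy (f0 1)) := (pdy_smooth S1).differentiable le2
  have D1xy : Differentiable ℝ (pdy (pdx (f0 1))) :=
    (pdy_smooth (pdx_smooth S1)).differentiable le2
  have D2x : Differentiable ℝ (pdx (f0 2)) := (pdx_smooth S2).differentiable le2
  have D2y : Differentiable ℝ (pdy (f0 2)) := (pdy_smooth S2).differentiable le2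
  have D2xx : Differentiable ℝ (pdx (pdx (f0 2))) :=
    (pdx_smooth (pdx_smooth S2)).differentiable le2
  have D2xy : Differentiable ℝ (pdy (pdx (f0 2))) :=
    (pdy_smooth (pdx_smooth S2)).differentiable le2
  have D2yy : Differentiable ℝ (pdy (pdy (f0 2))) :=
    (pdy_smooth (pdy_smooth S2)).differentiable le2
  have D1yy : Differentiable ℝ (pdy (pdy (f0 1))) :=
    (pdy_smooth (pdy_smooth S1)).differentiable le2
  -- iterate computation rules
  have I2x : ∀ g : ℝ × ℝ → ℝ, pdx^[2] g = pdx (pdx g) := fun g => rfl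
  have I2y : ∀ g : ℝ × ℝ → ℝ, pdy^[2] g = pdy (pdy g) := fun g => rfl
  have I1x : ∀ g : ℝ × ℝ → ℝ, pdx^[1] g = pdx g := fun g => rfl
  have I1y : ∀ g : ℝ × ℝ → ℝ, pdy^[1] g = pdy g := fun g => rfl
  have I0x : ∀ g : ℝ × ℝ → ℝ, pdx^[0] g = g := fun g => rfl
  have I0y : ∀ g : ℝ × ℝ → ℝ, pdy^[0] g = g := fun g => rfl
  -- closed forms of the φ's
  have P01 : phi1 3 f0 0 = fun p => (1/2) * pdx (f0 1) p := by
    funext p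
    simp only [phi1, A, Pi.zero_apply, mul_zero, add_zero]
    norm_num
  have P11 : phi1 3 f0 1 = fun p => pdx (f0 2) p + pdy (f0 1) p := by
    funext p
    simp only [phi1]
    norm_num
  have P21 : phi1 3 f0 2 = fun p => (1/2) * pdy (f0 2) p := by
    funext p
    simp only [phi1]
    norm_num [B]
  have Pm2 : phi2 3 f0 (-1) = 0 := by simp [phi2]
  have P02 : phi2 3 f0 0 = pdx (pdy (f0 1)) := by
    funext p
    simp only [phi2, if_neg (by norm_num : (0:ℤ) ≠ -1), Finset.sum_range_succ,
      Finset.sum_range_zero]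
    norm_num [I2x, I2y, I1x, I1y, I0x, I0y, ic00, ic32, ic11, ic21, ic22, ic10]
    rw [zz0, z2]
    simp
  have P12 : phi2 3 f0 1 = pdx (pdy (f0 2)) := by
    funext p
    simp only [phi2, if_neg (by norm_num : (1:ℤ) ≠ -1), Finset.sum_range_succ,
      Finset.sum_range_zero]
    norm_num [I2x, I2y, I1x, I1y, I0x, I0y, ic10, ic22, ic21, ic11, ic32, ic00]
    rw [z1, zz3]
    simp
  have P22 : phi2 3 f0 2 = 0 := by
    funext p
    simp only [phi2, if_neg (by norm_num : (2:ℤ) ≠ -1), Finset.sum_range_succ,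
      Finset.sum_range_zero]
    norm_num [ic20, ic12, ic31, ic01, ic42, icm10]
  -- the three cases
  have D1yx : Differentiable ℝ (pdx (pdy (f0 1))) :=
    (pdx_smooth (pdy_smooth S1)).differentiable le2
  have D2yx : Differentiable ℝ (pdx (pdy (f0 2))) :=
    (pdx_smooth (pdy_smooth S2)).differentiable le2
  intro j hj q
  interval_cases j
  · -- j = 0
    have t2 : pdy (phi2 3 f0 0) = 0 := by rw [P02]; exact zq
    have t3 : pdx (pdx (phi1 3 f0 0)) = 0 := by
      rw [P01, pdx_const_mul D1x, pdx_const_mul D1xx, z4]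
      funext p; simp
    have t4 : pdy (pdy (phi1 3 f0 0)) = 0 := by
      rw [P01, pdy_const_mul D1x, pdy_const_mul D1xy, ← pdx_pdy S1, zq]
      funext p; simp
    show Q2 3 f0 0 q = 0
    simp only [Q2, I2x, I2y]
    rw [show (0:ℤ) - 1 = -1 by norm_num, Pm2, pdx_zero, t2, t3, t4]
    simp
  · -- j = 1
    have u3 : pdx (pdx (phi1 3 f0 1)) = fun p => pdx (pdx (pdy (f0 1))) p := by
      rw [P11, pdx_add D2x D1y, pdx_add D2xx D1yx, zxf2]
      funext p; simp
    have u4 : pdy (pdy (phi1 3 f0 1)) = fun p => -(pdx (pdx (pdy (f0 1))) p) := by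
      rw [P11, pdy_add D2x D1y, pdy_add D2xy D1yy, e4, zyf1]
      funext p; simp
    show Q2 3 f0 1 q = 0
    simp only [Q2, I2x, I2y]
    rw [show (1:ℤ) - 1 = 0 by norm_num, P02, P12, e2, u3, u4]
    simp
  · -- j = 2
    have v1 : pdx (phi2 3 f0 1) = 0 := by rw [P12]; exact zxx2
    have v2 : pdy (phi2 3 f0 2) = 0 := by rw [P22, pdy_zero]
    have v3 : pdx (pdx (phi1 3 f0 2)) = 0 := by
      rw [P21, pdx_const_mul D2y, pdx_const_mul D2yx, zxx2]
      funext p; simp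
    have v4 : pdy (pdy (phi1 3 f0 2)) = 0 := by
      rw [P21, pdy_const_mul D2y, pdy_const_mul D2yy, z3]
      funext p; simp
    show Q2 3 f0 2 q = 0
    simp only [Q2, I2x, I2y]
    rw [show (2:ℤ) - 1 = 1 by norm_num, v1, v2, v3, v4]
    simp
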